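/- The group GL_d(ℚ) is generated, as a group, by GL_d(ℤ) together with all diagonal matrices diag(1, …, 1, n, 1, …, 1) where n is a positive integer placed in one diagonal position and all other diagonal entries equal 1. -/

import Mathlib

open Matrix

namespace Stmt2Aux

variable (d : ℕ)

def S : Set (Matrix (Fin d) (Fin d) ℚ)ˣ :=
  { A : (Matrix (Fin d) (Fin d) ℚ)ˣ |
      ∃ B : (Matrix (Fin d) (Fin d) ℤ)ˣ,
        Units.map (Int.castRingHom ℚ).mapMatrix.toMonoidHom B = A } ∪
  { A : (Matrix (Fin d) (Fin d) ℚ)ˣ |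
      ∃ (j : Fin d) (n : ℕ), 0 < n ∧
        (A : Matrix (Fin d) (Fin d) ℚ) =
          Matrix.diagonal (fun i => if i = j then (n : ℚ) else 1) }

abbrev H : Subgroup (Matrix (Fin d) (Fin d) ℚ)ˣ := Subgroup.closure (S d)

/-- single-entry diagonal unit -/
def dU (j : Fin d) (q : ℚ) (hq : q ≠ 0) : (Matrix (Fin d) (Fin d) ℚ)ˣ where
  val := diagonal (fun i => if i = j then q else 1)
  inv := diagonal (fun i => if i = j then q⁻¹ else 1)
  val_inv := by
    rw [diagonal_mul_diagonal]
    have : (fun i => (if i = j then q else 1) * (if i = j then q⁻¹ else 1)) =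
        fun _ : Fin d => (1 : ℚ) := by
      funext i; split <;> simp_all [mul_inv_cancel₀ hq]
    rw [this, diagonal_one]
  inv_val := by
    rw [diagonal_mul_diagonal]
    have : (fun i => (if i = j then q⁻¹ else 1) * (if i = j then q else 1)) =
        fun _ : Fin d => (1 : ℚ) := by
      funext i; split <;> simp_all [inv_mul_cancel₀ hq]
    rw [this, diagonal_one]

lemma dU_congr (j : Fin d) {q r : ℚ} (hq : q ≠ 0) (hr : r ≠ 0) (h : q = r) :
    dU d j q hq = dU d j r hr := by subst h; rfl

lemma dU_mul (j : Fin d) (q r : ℚ) (hq : q ≠ 0) (hr : r ≠ 0) :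
    dU d j q hq * dU d j r hr = dU d j (q * r) (mul_ne_zero hq hr) := by
  apply Units.ext
  show (diagonal _ * diagonal _ : Matrix (Fin d) (Fin d) ℚ) = diagonal _
  rw [diagonal_mul_diagonal]
  have hfun : (fun i => (if i = j then q else 1) * if i = j then r else 1) =
      fun i : Fin d => if i = j then q * r else 1 := by
    funext i; split <;> simp
  rw [hfun]

lemma dU_nat_mem (j : Fin d) (n : ℕ) (hn : 0 < n) :
    dU d j (n : ℚ) (by positivity) ∈ H d :=
  Subgroup.subset_closure (Or.inr ⟨j, n, hn, rfl⟩)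

lemma dU_neg_one_mem (j : Fin d) : dU d j (-1) (by norm_num) ∈ H d := by
  apply Subgroup.subset_closure
  left
  refine ⟨⟨diagonal (fun i => if i = j then (-1 : ℤ) else 1),
      diagonal (fun i => if i = j then (-1 : ℤ) else 1), ?_, ?_⟩, ?_⟩
  · rw [diagonal_mul_diagonal]
    have : (fun i => (if i = j then (-1:ℤ) else 1) * (if i = j then (-1:ℤ) else 1)) =
        fun _ : Fin d => (1 : ℤ) := by funext i; split <;> simp
    rw [this, diagonal_one]
  · rw [diagonal_mul_diagonal]
    have : (fun i => (if i = j then (-1:ℤ) else 1) * (if i = j then (-1:ℤ) else 1)) =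
        fun _ : Fin d => (1 : ℤ) := by funext i; split <;> simp
    rw [this, diagonal_one]
  · apply Units.ext
    rw [Units.coe_map]
    show ((Int.castRingHom ℚ).mapMatrix (diagonal _)) = diagonal _
    rw [RingHom.mapMatrix_apply]
    rw [Matrix.diagonal_map (by simp)]
    have hfun : (fun m => (Int.castRingHom ℚ) (if m = j then (-1:ℤ) else 1)) =
        fun i : Fin d => if i = j then (-1:ℚ) else 1 := by
      funext i; split <;> simp
    rw [hfun]

lemma dU_pos_mem (j : Fin d) (q : ℚ) (hq : 0 < q) : dU d j q hq.ne' ∈ H d := by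
  have hbq : 0 < q.den := q.pos
  have hb : ((q.den : ℚ)) ≠ 0 := by positivity
  have hnum : 0 < q.num := Rat.num_pos.mpr hq
  have h2 : q * (q.den : ℚ) = ((q.num.toNat : ℕ) : ℚ) := by
    have h3 : ((q.num.toNat : ℕ) : ℚ) = (q.num : ℚ) := by
      exact_mod_cast Int.toNat_of_nonneg hnum.le
    rw [h3, ← eq_div_iff hb]
    exact (Rat.num_div_den q).symm
  have key : dU d j q hq.ne' * dU d j (q.den : ℚ) hb =
      dU d j ((q.num.toNat : ℕ) : ℚ) (by rw [← h2]; exact mul_ne_zero hq.ne' hb) := by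
    rw [dU_mul]
    exact dU_congr d j _ _ h2
  have : dU d j q hq.ne' =
      dU d j ((q.num.toNat : ℕ) : ℚ) (by rw [← h2]; exact mul_ne_zero hq.ne' hb) *
        (dU d j (q.den : ℚ) hb)⁻¹ := by
    rw [← key]; group
  rw [this]
  exact mul_mem (by convert dU_nat_mem d j q.num.toNat (by omega)) 
    (inv_mem (by convert dU_nat_mem d j q.den hbq))

lemma dU_mem (j : Fin d) (q : ℚ) (hq : q ≠ 0) : dU d j q hq ∈ H d := by
  rcases hq.lt_or_gt with h | h
  · have hmq : 0 < -q := by linarith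
    have : dU d j q hq = dU d j (-1) (by norm_num) * dU d j (-q) hmq.ne' := by
      rw [dU_mul]
      exact dU_congr d j _ _ (by ring)
    rw [this]
    exact mul_mem (dU_neg_one_mem d j) (dU_pos_mem d j (-q) hmq)
  · exact dU_pos_mem d j q h

def tU (i j : Fin d) (hij : i ≠ j) (c : ℚ) : (Matrix (Fin d) (Fin d) ℚ)ˣ where
  val := transvection i j c
  inv := transvection i j (-c)
  val_inv := by rw [transvection_mul_transvection_same i j hij]; simp [transvection]
  inv_val := by rw [transvection_mul_transvection_same i j hij]; simp [transvection]

lemma tU_congr (i j : Fin d) (hij : i ≠ j) {c c' : ℚ} (h : c = c') :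
    tU d i j hij c = tU d i j hij c' := by subst h; rfl

lemma tU_int_mem (i j : Fin d) (hij : i ≠ j) (p : ℤ) : tU d i j hij (p : ℚ) ∈ H d := by
  apply Subgroup.subset_closure
  left
  refine ⟨⟨transvection i j p, transvection i j (-p), ?_, ?_⟩, ?_⟩
  · rw [transvection_mul_transvection_same i j hij]; simp [transvection]
  · rw [transvection_mul_transvection_same i j hij]; simp [transvection]
  · apply Units.ext
    rw [Units.coe_map]
    show (Int.castRingHom ℚ).mapMatrix (transvection i j (p : ℤ)) = transvection i j (p : ℚ)
    rw [RingHom.mapMatrix_apply]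
    ext a b
    by_cases h : i = a ∧ j = b
    · obtain ⟨rfl, rfl⟩ := h
      simp [transvection, Matrix.map_apply, Matrix.one_apply, hij]
    · simp [transvection, Matrix.map_apply, Matrix.add_apply, Matrix.one_apply,
        Matrix.single_apply_of_ne i j _ a b h]

lemma tU_conj (i j : Fin d) (hij : i ≠ j) (p : ℤ) (q : ℚ) (hq : q ≠ 0) :
    dU d j q hq * tU d i j hij (p : ℚ) * (dU d j q hq)⁻¹ = tU d i j hij ((p : ℚ) / q) := by
  apply Units.ext
  show diagonal _ * transvection i j (p : ℚ) * diagonal _ = transvection i j ((p : ℚ) / q)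
  ext a b
  rw [Matrix.mul_diagonal, Matrix.diagonal_mul]
  rcases eq_or_ne i a with rfl | ha
  · rcases eq_or_ne j b with rfl | hb
    · simp [transvection, Matrix.one_apply, hij, div_eq_mul_inv]
    · rw [transvection, transvection, Matrix.add_apply, Matrix.add_apply,
        Matrix.single_apply_of_ne i j _ i b (by tauto),
        Matrix.single_apply_of_ne i j _ i b (by tauto)]
      simp only [Matrix.one_apply, add_zero]
      split_ifs <;> simp_all
  · rw [transvection, transvection, Matrix.add_apply, Matrix.add_apply,
      Matrix.single_apply_of_ne i j _ a b (by tauto),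
      Matrix.single_apply_of_ne i j _ a b (by tauto)]
    simp only [Matrix.one_apply, add_zero]
    split_ifs <;> simp_all

lemma tU_mem (i j : Fin d) (hij : i ≠ j) (c : ℚ) : tU d i j hij c ∈ H d := by
  have hb : ((c.den : ℚ)) ≠ 0 := by
    have := c.pos; positivity
  have : tU d i j hij c =
      dU d j (c.den : ℚ) hb * tU d i j hij (c.num : ℚ) * (dU d j (c.den : ℚ) hb)⁻¹ := by
    rw [tU_conj]
    exact tU_congr d i j hij (Rat.num_div_den c).symm
  rw [this]
  exact mul_mem (mul_mem (dU_mem d j _ hb) (tU_int_mem d i j hij c.num))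
    (inv_mem (dU_mem d j _ hb))

lemma diag_prod_eq (f : Fin d → ℚ) (l : List (Fin d)) (hnd : l.Nodup) :
    (l.map fun i => diagonal (fun k => if k = i then f i else 1)).prod =
      diagonal (fun k : Fin d => if k ∈ l then f k else 1) := by
  induction l with
  | nil => simp
  | cons i t ih =>
    rw [List.map_cons, List.prod_cons, ih hnd.of_cons, diagonal_mul_diagonal]
    have hf : (fun k => (if k = i then f i else 1) * (if k ∈ t then f k else 1)) =
        fun k : Fin d => if k ∈ i :: t then f k else 1 := by
      funext k
      by_cases hk : k = i
      · subst hk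
        have hkt : k ∉ t := (List.nodup_cons.mp hnd).1
        simp [hkt]
      · simp [hk, List.mem_cons]
    rw [hf]

lemma key : ∀ A : (Matrix (Fin d) (Fin d) ℚ)ˣ, A ∈ H d := by
  suffices h : ∀ N : Matrix (Fin d) (Fin d) ℚ, det N ≠ 0 →
      ∀ B : (Matrix (Fin d) (Fin d) ℚ)ˣ, (B : Matrix (Fin d) (Fin d) ℚ) = N → B ∈ H d by
    intro A
    refine h A ?_ A rfl
    have hA : IsUnit (A : Matrix (Fin d) (Fin d) ℚ) := A.isUnit
    rw [Matrix.isUnit_iff_isUnit_det] at hA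
    exact hA.ne_zero
  intro N hN
  refine diagonal_transvection_induction_of_det_ne_zero
    (fun N => ∀ B : (Matrix (Fin d) (Fin d) ℚ)ˣ, (B : Matrix (Fin d) (Fin d) ℚ) = N → B ∈ H d)
    N hN ?_ ?_ ?_
  · intro D hD B hB
    have hDi : ∀ i, D i ≠ 0 := by
      intro i
      rw [det_diagonal] at hD
      exact Finset.prod_ne_zero_iff.mp hD i (Finset.mem_univ i)
    have hBeq : B = ((List.finRange d).map (fun i => dU d i (D i) (hDi i))).prod := by
      apply Units.ext
      rw [hB]
      rw [show ((((List.finRange d).map (fun i => dU d i (D i) (hDi i))).prod : _ˣ) :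
            Matrix (Fin d) (Fin d) ℚ) =
          (((List.finRange d).map (fun i => dU d i (D i) (hDi i))).map
            (Units.coeHom (Matrix (Fin d) (Fin d) ℚ))).prod from
        map_list_prod (Units.coeHom _) _]
      rw [List.map_map]
      rw [show ((Units.coeHom (Matrix (Fin d) (Fin d) ℚ)) ∘ fun i => dU d i (D i) (hDi i)) =
          fun i => diagonal (fun k => if k = i then D i else 1) from rfl]
      rw [diag_prod_eq d D (List.finRange d) (List.nodup_finRange d)]
      have : (fun k : Fin d => if k ∈ List.finRange d then D k else 1) = D := by
        funext k; simp
      rw [this]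
    rw [hBeq]
    refine Subgroup.list_prod_mem _ ?_
    intro x hx
    obtain ⟨i, _, rfl⟩ := List.mem_map.mp hx
    exact dU_mem d i (D i) (hDi i)
  · intro t B hB
    have hBeq : B = tU d t.i t.j t.hij t.c := by
      apply Units.ext
      rw [hB]
      rcases t with ⟨ti, tj, h, c⟩
      rfl
    rw [hBeq]
    exact tU_mem d t.i t.j t.hij t.c
  · intro M1 M2 h1 h2 p1 p2 B hB
    have hBeq : B = Matrix.nonsingInvUnit M1 (isUnit_iff_ne_zero.mpr h1) *
        Matrix.nonsingInvUnit M2 (isUnit_iff_ne_zero.mpr h2) := by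
      apply Units.ext
      rw [hB]
      rfl
    rw [hBeq]
    exact mul_mem (p1 _ rfl) (p2 _ rfl)

end Stmt2Aux

theorem stmt_2 (d : ℕ) :
    Subgroup.closure
      ({ A : (Matrix (Fin d) (Fin d) ℚ)ˣ |
          ∃ B : (Matrix (Fin d) (Fin d) ℤ)ˣ,
            Units.map (Int.castRingHom ℚ).mapMatrix.toMonoidHom B = A } ∪
       { A : (Matrix (Fin d) (Fin d) ℚ)ˣ |
          ∃ (j : Fin d) (n : ℕ), 0 < n ∧
            (A : Matrix (Fin d) (Fin d) ℚ) =
              Matrix.diagonal (fun i => if i = j then (n : ℚ) else 1) }) = ⊤ := by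
  rw [eq_top_iff]
  intro A _
  exact Stmt2Aux.key d A
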